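/- arXiv:1807.00616 — 4 statements merged into one kernel-verified Lean document; each statement's English description precedes it below -/
import Mathlib

section
/- Let α, β < ω^ω and m ∈ ℕ. If α ≤ β and MC(α) < m, then α[m] ≤ β[m]. -/
/- Ordinals `α < ω^ω` are represented in Cantor normal form as the list of their
exponents in nonincreasing order: `[n₀, n₁, …, n_{k-1}]` codes `ω^{n₀} + ⋯ + ω^{n_{k-1}}`,
and such a list is a valid Cantor normal form when it is sorted w.r.t. `≥`. -/

/-- The Ketonen–Solovay operation `α[m]`: `0[m] = 0`; `α[m] = β` if `α = β + 1`;
`α[m] = β + ω^(n-1)·m` if `α = β + ω^n` with `n ≥ 1`. -/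
def KSstep : List ℕ → ℕ → List ℕ
  | [], _ => []
  | [0], _ => []
  | [Nat.succ n], m => List.replicate m n
  | a :: b :: l, m => a :: KSstep (b :: l) m

/-- A finite set `X = {x₀ < ⋯ < x_{ℓ-1}} ⊆ ℕ` is `α`-large if `α[x₀][x₁]⋯[x_{ℓ-1}| = 0`. -/
def IsLarge (α : List ℕ) (X : Finset ℕ) : Prop :=
  (X.sort (· ≤ ·)).foldl KSstep α = []

/-- The ordering on Cantor normal forms: `α < β` iff there is `i` with `n_j = m_j`
for all `j < i` and (`n_i < m_i` or `α` ends at `i` while `β` does not); this is the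
lexicographic order on the lists of exponents. `α ≤ β` iff `α = β` or `α < β`. -/
def CNFLe (α β : List ℕ) : Prop := α = β ∨ List.Lex (· < ·) α β

/-- `MC α` is the maximal coefficient of `α`: writing `α = ω^n·k_n + ⋯ + ω^0·k_0`,
`MC α = max {k_n, …, k_0}`, i.e. the maximal multiplicity of an exponent in the list. -/
def MC (α : List ℕ) : ℕ := (α.map fun n => α.count n).foldr max 0

lemma cnfle_nil (x : List ℕ) : CNFLe [] x := by
  cases x with
  | nil => exact Or.inl rfl
  | cons a l => exact Or.inr List.Lex.nil

lemma le_foldr_max {a : ℕ} {l : List ℕ} (h : a ∈ l) : a ≤ l.foldr max 0 := by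
  induction l with
  | nil => cases h
  | cons b t ih =>
    rcases List.mem_cons.1 h with rfl | h
    · exact le_max_left _ _
    · exact le_trans (ih h) (le_max_right _ _)

lemma count_le_MC (α : List ℕ) (n : ℕ) : α.count n ≤ MC α := by
  by_cases h : n ∈ α
  · exact le_foldr_max (List.mem_map_of_mem h)
  · simp [List.count_eq_zero_of_not_mem h]

lemma KS_lt_rep (k m : ℕ) : ∀ (α : List ℕ) (j : ℕ), List.Pairwise (· ≥ ·) α →
    (∀ x ∈ α, x ≤ k) → α.count k < j →
    List.Lex (· < ·) (KSstep α m) (List.replicate j k)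
  | [], j, _, _, hc => by
    obtain ⟨j', rfl⟩ : ∃ j', j = j' + 1 := ⟨j - 1, by simp at hc; omega⟩
    simpa [KSstep, List.replicate_succ] using List.Lex.nil
  | [0], j, _, _, hc => by
    obtain ⟨j', rfl⟩ : ∃ j', j = j' + 1 := ⟨j - 1, by omega⟩
    simpa [KSstep, List.replicate_succ] using List.Lex.nil
  | [Nat.succ n], j, _, hk, hc => by
    obtain ⟨j', rfl⟩ : ∃ j', j = j' + 1 := ⟨j - 1, by omega⟩
    have hn : n < k := by have := hk (n+1) (by simp); omega
    cases m with
    | zero => simpa [KSstep, List.replicate_succ] using List.Lex.nil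
    | succ m' =>
      simpa [KSstep, List.replicate_succ] using List.Lex.rel hn
  | a :: b :: l, j, hs, hk, hc => by
    obtain ⟨j', rfl⟩ : ∃ j', j = j' + 1 := ⟨j - 1, by omega⟩
    have hak : a ≤ k := hk a (by simp)
    rw [List.replicate_succ]
    simp only [KSstep]
    rcases lt_or_eq_of_le hak with h | rfl
    · exact List.Lex.rel h
    · have hs' : List.Pairwise (· ≥ ·) (b :: l) := hs.of_cons
      have hk' : ∀ x ∈ b :: l, x ≤ a :=
        fun x hx => List.rel_of_pairwise_cons hs hx
      have hc' : (b :: l).count a < j' := by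
        have : (a :: b :: l).count a = (b :: l).count a + 1 := by simp
        omega
      exact List.Lex.cons (KS_lt_rep a m (b :: l) j' hs' hk' hc')

lemma KS_main (m : ℕ) (α : List ℕ) : ∀ β : List ℕ, List.Pairwise (· ≥ ·) α →
    (∀ n, α.count n < m) → List.Lex (· < ·) α β →
    CNFLe (KSstep α m) (KSstep β m) := by
  induction α with
  | nil =>
    intro β _ _ hlex
    cases β with
    | nil => cases hlex
    | cons b t => exact cnfle_nil _
  | cons a α' ih =>
    intro β hs hc hlex
    cases β with
    | nil => cases hlex
    | cons b β' =>
      cases hlex with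
      | rel hab =>
        cases β' with
        | nil =>
          cases b with
          | zero => exact absurd hab (Nat.not_lt_zero a)
          | succ k =>
            have hak : a ≤ k := by omega
            have hk : ∀ x ∈ a :: α', x ≤ k := by
              intro x hx
              rcases List.mem_cons.1 hx with rfl | hx
              · exact hak
              · exact le_trans (List.rel_of_pairwise_cons hs hx) hak
            exact Or.inr (KS_lt_rep k m (a :: α') m hs hk (hc k))
        | cons c t =>
          cases α' with
          | nil =>
            cases a with
            | zero =>
              simp only [KSstep]
              exact Or.inr List.Lex.nil
            | succ n =>
              simp only [KSstep]
              cases m with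
              | zero => exact Or.inr List.Lex.nil
              | succ m' =>
                rw [List.replicate_succ]
                exact Or.inr (List.Lex.rel (by omega))
          | cons x t' =>
            simp only [KSstep]
            exact Or.inr (List.Lex.rel hab)
      | cons hlex' =>
        cases α' with
        | nil =>
          cases hlex' with
          | nil =>
            rename_i c t
            cases a with
            | zero =>
              simp only [KSstep]
              exact Or.inr List.Lex.nil
            | succ n =>
              simp only [KSstep]
              cases m with
              | zero => exact Or.inr List.Lex.nil
              | succ m' =>
                rw [List.replicate_succ]
                exact Or.inr (List.Lex.rel (by omega))
        | cons x t' =>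
          cases β' with
          | nil => cases hlex'
          | cons y s =>
            simp only [KSstep]
            have hs' : List.Pairwise (· ≥ ·) (x :: t') := hs.of_cons
            have hc' : ∀ n, (x :: t').count n < m := by
              intro n
              have h1 : (x :: t').count n ≤ (a :: x :: t').count n :=
                List.Sublist.count_le n (List.sublist_cons_self _ _)
              exact lt_of_le_of_lt h1 (hc n)
            rcases ih (y :: s) hs' hc' hlex' with h | h
            · exact Or.inl (by rw [h])
            · exact Or.inr (List.Lex.cons h)

/-- Let `α, β < ω^ω` and `m ∈ ℕ`. If `α ≤ β` and `MC(α) < m`, then `α[m] ≤ β[m]`. -/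
theorem KSstep_le_KSstep (α β : List ℕ)
    (hα : List.Pairwise (· ≥ ·) α) (hβ : List.Pairwise (· ≥ ·) β) (m : ℕ)
    (hle : CNFLe α β) (hmc : MC α < m) :
    CNFLe (KSstep α m) (KSstep β m) := by
  rcases hle with rfl | hlex
  · exact Or.inl rfl
  · exact KS_main m α β hα (fun n => lt_of_le_of_lt (count_le_MC α n) hmc) hlex
end

section
/- Let α < ω^ω and let X = {x_0 < ⋯ < x_{ℓ-1}} and Y = {y_0 < ⋯ < y_{ℓ'-1}} be finite subsets of ℕ with ℓ ≤ ℓ'. If y_i ≤ x_i for each i < ℓ and X is α-large, then Y is α-large. In particular, if X is α-large and X ⊆ Y, then Y is α-large. -/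
/- ### Auxiliary lemmas about `KSstep` -/

lemma KSstep_nil (m : ℕ) : KSstep [] m = [] := rfl

lemma KSstep_cons (a : ℕ) {t : List ℕ} (ht : t ≠ []) (m : ℕ) :
    KSstep (a :: t) m = a :: KSstep t m := by
  cases t with
  | nil => exact absurd rfl ht
  | cons b l => simp [KSstep]

lemma KSstep_concat_zero (R : List ℕ) (m : ℕ) : KSstep (R ++ [0]) m = R := by
  induction R with
  | nil => rfl
  | cons a R ih =>
    rw [List.cons_append, KSstep_cons a (by simp) m, ih]

lemma KSstep_concat_succ (R : List ℕ) (n m : ℕ) :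
    KSstep (R ++ [n + 1]) m = R ++ List.replicate m n := by
  induction R with
  | nil => rfl
  | cons a R ih =>
    rw [List.cons_append, KSstep_cons a (by simp) m, ih, List.cons_append]

lemma foldl_KSstep_nil (zs : List ℕ) : zs.foldl KSstep [] = [] := by
  induction zs with
  | nil => rfl
  | cons z zs ih => simpa [List.foldl_cons, KSstep_nil] using ih

/- ### The embedding relation -/

/-- `SubLE l L` means `l` is obtained from `L` by deleting some entries and
decreasing some of the remaining entries. -/
inductive SubLE : List ℕ → List ℕ → Prop
  | nil : SubLE [] []
  | skip {l L : List ℕ} (a : ℕ) : SubLE l L → SubLE l (L ++ [a])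
  | snoc {l L : List ℕ} {a b : ℕ} : a ≤ b → SubLE l L → SubLE (l ++ [a]) (L ++ [b])

lemma SubLE.refl (L : List ℕ) : SubLE L L := by
  induction L using List.reverseRecOn with
  | nil => exact SubLE.nil
  | append_singleton R a ih => exact SubLE.snoc le_rfl ih

lemma SubLE.eq_nil' {l L : List ℕ} (h : SubLE l L) (hL : L = []) : l = [] := by
  cases h with
  | nil => rfl
  | skip a h' => simp at hL
  | snoc hab h' => simp at hL

lemma SubLE.eq_nil {l : List ℕ} (h : SubLE l []) : l = [] := h.eq_nil' rfl

lemma SubLE.pad {l R : List ℕ} (h : SubLE l R) (k e : ℕ) :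
    SubLE l (R ++ List.replicate k e) := by
  induction k with
  | zero => simpa using h
  | succ k ih =>
    rw [List.replicate_succ', ← List.append_assoc]
    exact SubLE.skip e ih

lemma SubLE.ext {l R : List ℕ} (h : SubLE l R) {d e : ℕ} (hde : d ≤ e) (k : ℕ) :
    SubLE (l ++ List.replicate k d) (R ++ List.replicate k e) := by
  induction k with
  | zero => simpa using h
  | succ k ih =>
    rw [List.replicate_succ' (n := k) (a := d), List.replicate_succ' (n := k) (a := e), ← List.append_assoc,
      ← List.append_assoc]
    exact SubLE.snoc hde ih

lemma SubLE.combine {l R : List ℕ} (h : SubLE l R) {y x d e : ℕ} (hyx : y ≤ x)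
    (hde : d ≤ e) : SubLE (l ++ List.replicate y d) (R ++ List.replicate x e) := by
  have hx : List.replicate x e = List.replicate (x - y) e ++ List.replicate y e := by
    rw [← List.replicate_add, Nat.sub_add_cancel hyx]
  rw [hx, ← List.append_assoc]
  exact (h.pad (x - y) e).ext hde y

lemma SubLE.concat_inv' {l M R : List ℕ} {c : ℕ} (h : SubLE l M) (hM : M = R ++ [c]) :
    SubLE l R ∨ ∃ r c', l = r ++ [c'] ∧ c' ≤ c ∧ SubLE r R := by
  cases h with
  | nil => exact absurd hM.symm (by simp)
  | skip a h' =>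
    obtain ⟨hL, ha⟩ := List.append_inj' hM rfl
    exact Or.inl (hL ▸ h')
  | snoc hab h' =>
    obtain ⟨hL, hc⟩ := List.append_inj' hM rfl
    simp only [List.cons.injEq] at hc
    exact Or.inr ⟨_, _, rfl, hc.1 ▸ hab, hL ▸ h'⟩

lemma SubLE.concat_inv {l R : List ℕ} {c : ℕ} (h : SubLE l (R ++ [c])) :
    SubLE l R ∨ ∃ r c', l = r ++ [c'] ∧ c' ≤ c ∧ SubLE r R := h.concat_inv' rfl

/- ### Sorted-list helpers -/

lemma getD_lt_getD_succ {xs : List ℕ} (h : xs.Pairwise (· < ·)) {i : ℕ}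
    (hi : i + 1 < xs.length) : xs.getD i 0 < xs.getD (i + 1) 0 := by
  rw [List.getD_eq_getElem xs 0 (Nat.lt_of_succ_lt hi), List.getD_eq_getElem xs 0 hi]
  exact h.rel_get_of_lt (a := ⟨i, Nat.lt_of_succ_lt hi⟩) (b := ⟨i + 1, hi⟩)
    (by simp [Fin.lt_def])

/- ### Key lemma -/

lemma key (N : ℕ) : ∀ xs ys l L : List ℕ, xs.length ≤ N →
    xs.Pairwise (· < ·) → ys.Pairwise (· < ·) → xs.length ≤ ys.length →
    (∀ i < xs.length, ys.getD i 0 ≤ xs.getD i 0) → SubLE l L →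
    List.foldl KSstep L xs = [] → List.foldl KSstep l ys = [] := by
  induction N with
  | zero =>
    intro xs ys l L hN _ _ _ _ hsub hfold
    have hxs : xs = [] := List.eq_nil_of_length_eq_zero (Nat.le_zero.mp hN)
    subst hxs
    simp only [List.foldl_nil] at hfold
    subst hfold
    rw [hsub.eq_nil]
    exact foldl_KSstep_nil ys
  | succ N ih =>
    intro xs ys l L hN hxs hys hlen hpt hsub hfold
    cases xs with
    | nil =>
      simp only [List.foldl_nil] at hfold
      subst hfold
      rw [hsub.eq_nil]
      exact foldl_KSstep_nil ys
    | cons x xs' =>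
      cases ys with
      | nil => simp at hlen
      | cons y ys' =>
        have hyx : y ≤ x := by
          have := hpt 0 (by simp)
          simpa using this
        rw [List.foldl_cons] at hfold
        rw [List.foldl_cons]
        have hN' : xs'.length ≤ N := by simpa using hN
        have hxs' : xs'.Pairwise (· < ·) := hxs.of_cons
        have hys' : ys'.Pairwise (· < ·) := hys.of_cons
        -- pointwise bounds used in the two kinds of IH applications
        have hptA : ∀ i < xs'.length, (y :: ys').getD i 0 ≤ xs'.getD i 0 := by
          intro i hi
          have h1 : (y :: ys').getD i 0 ≤ (x :: xs').getD i 0 :=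
            hpt i (Nat.lt_succ_of_lt hi)
          have h2 : (x :: xs').getD i 0 ≤ (x :: xs').getD (i + 1) 0 :=
            le_of_lt (getD_lt_getD_succ hxs (by simpa using Nat.succ_lt_succ hi))
          calc (y :: ys').getD i 0 ≤ (x :: xs').getD i 0 := h1
            _ ≤ (x :: xs').getD (i + 1) 0 := h2
            _ = xs'.getD i 0 := List.getD_cons_succ
        have hlenA : xs'.length ≤ (y :: ys').length :=
          le_trans (Nat.le_succ _) (by simpa using hlen)
        have hptB : ∀ i < xs'.length, ys'.getD i 0 ≤ xs'.getD i 0 := by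
          intro i hi
          have := hpt (i + 1) (by simpa using Nat.succ_lt_succ hi)
          simpa using this
        have hlenB : xs'.length ≤ ys'.length := by simpa using hlen
        rcases List.eq_nil_or_concat L with rfl | ⟨R, c, rfl⟩
        · rw [hsub.eq_nil, KSstep_nil]
          exact foldl_KSstep_nil ys'
        · rw [List.concat_eq_append] at hsub hfold
          rcases hsub.concat_inv with hA | ⟨r, c', rfl, hc, hr⟩
          · -- the embedding does not use the last entry of `L`
            have hsub' : SubLE l (KSstep (R ++ [c]) x) := by
              cases c with
              | zero => rw [KSstep_concat_zero]; exact hA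
              | succ e => rw [KSstep_concat_succ]; exact hA.pad x e
            have := ih xs' (y :: ys') l _ hN' hxs' hys hlenA hptA hsub' hfold
            rwa [List.foldl_cons] at this
          · -- the last entry `c'` of `l` is embedded into the last entry `c` of `L`
            cases c with
            | zero =>
              have hc0 : c' = 0 := Nat.le_zero.mp hc
              subst hc0
              rw [KSstep_concat_zero] at hfold
              rw [KSstep_concat_zero]
              exact ih xs' ys' r R hN' hxs' hys' hlenB hptB hr hfold
            | succ e =>
              rw [KSstep_concat_succ] at hfold
              cases c' with
              | zero =>
                rw [KSstep_concat_zero]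
                exact ih xs' ys' r _ hN' hxs' hys' hlenB hptB (hr.pad x e) hfold
              | succ d =>
                rw [KSstep_concat_succ]
                exact ih xs' ys' _ _ hN' hxs' hys' hlenB hptB
                  (hr.combine hyx (Nat.succ_le_succ_iff.mp hc)) hfold

/- ### From subsets to pointwise bounds -/

lemma sublist_of_subset_sorted : ∀ l₂ l₁ : List ℕ, l₁.Pairwise (· < ·) →
    l₂.Pairwise (· < ·) → l₁ ⊆ l₂ → l₁.Sublist l₂ := by
  intro l₂
  induction l₂ with
  | nil =>
    intro l₁ _ _ h
    simpa using List.subset_nil.mp h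
  | cons b t ih =>
    intro l₁ h₁ h₂ h
    cases l₁ with
    | nil => exact List.nil_sublist _
    | cons a s =>
      rcases eq_or_ne a b with rfl | hab
      · refine List.Sublist.cons₂ a (ih s h₁.of_cons h₂.of_cons ?_)
        intro z hz
        have hz' : z ∈ a :: t := h (List.mem_cons_of_mem a hz)
        have haz : a < z := (List.pairwise_cons.mp h₁).1 z hz
        rcases List.mem_cons.mp hz' with rfl | hzt
        · exact absurd haz (lt_irrefl z)
        · exact hzt
      · refine List.Sublist.cons b (ih (a :: s) h₁ h₂.of_cons ?_)
        have hat : a ∈ t := by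
          rcases List.mem_cons.mp (h (List.mem_cons_self (a := a) (l := s))) with rfl | hat
          · exact absurd rfl hab
          · exact hat
        have hba : b < a := (List.pairwise_cons.mp h₂).1 a hat
        intro z hz
        have hz' : z ∈ b :: t := h hz
        have haz : a ≤ z := by
          rcases List.mem_cons.mp hz with rfl | hzs
          · exact le_rfl
          · exact le_of_lt ((List.pairwise_cons.mp h₁).1 z hzs)
        rcases List.mem_cons.mp hz' with rfl | hzt
        · exact absurd (lt_of_lt_of_le hba haz) (lt_irrefl z)
        · exact hzt

lemma getD_cons_le {a : ℕ} {l : List ℕ} (h : (a :: l).Pairwise (· ≤ ·)) {i : ℕ}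
    (hi : i < l.length) : (a :: l).getD i 0 ≤ l.getD i 0 := by
  cases i with
  | zero =>
    rw [List.getD_cons_zero, List.getD_eq_getElem l 0 hi]
    exact (List.pairwise_cons.mp h).1 _ (List.getElem_mem hi)
  | succ k =>
    rw [List.getD_cons_succ, List.getD_eq_getElem l 0 hi,
      List.getD_eq_getElem l 0 (Nat.lt_of_succ_lt hi)]
    exact List.Pairwise.rel_get_of_lt (List.pairwise_cons.mp h).2
      (a := ⟨k, Nat.lt_of_succ_lt hi⟩) (b := ⟨k + 1, hi⟩) (by simp [Fin.lt_def])

lemma getD_le_of_sublist {l₁ l₂ : List ℕ} (h : l₁.Sublist l₂) :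
    l₂.Pairwise (· ≤ ·) → ∀ i < l₁.length, l₂.getD i 0 ≤ l₁.getD i 0 := by
  induction h with
  | slnil => intro _ i hi; simp at hi
  | @cons a b c h' ih =>
    intro hsort i hi
    exact le_trans (getD_cons_le hsort (lt_of_lt_of_le hi h'.length_le))
      (ih (List.pairwise_cons.mp hsort).2 i hi)
  | @cons_cons a b c h' ih =>
    intro hsort i hi
    cases i with
    | zero => simp
    | succ k =>
      rw [List.getD_cons_succ, List.getD_cons_succ]
      exact ih (List.pairwise_cons.mp hsort).2 k (by simpa using hi)

/- ### Main theorem -/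

/-- Let `α < ω^ω` and let `X = {x₀ < ⋯ < x_{ℓ-1}}`, `Y = {y₀ < ⋯ < y_{ℓ'-1}}` be finite
subsets of `ℕ` with `ℓ ≤ ℓ'`. If `y_i ≤ x_i` for each `i < ℓ` and `X` is `α`-large,
then `Y` is `α`-large. In particular, if `X` is `α`-large and `X ⊆ Y`, then `Y` is
`α`-large. -/
theorem isLarge_of_pointwise_le (α : List ℕ) :
    (∀ X Y : Finset ℕ, X.card ≤ Y.card →
      (∀ i < X.card, (Y.sort (· ≤ ·)).getD i 0 ≤ (X.sort (· ≤ ·)).getD i 0) →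
      IsLarge α X → IsLarge α Y) ∧
    (∀ X Y : Finset ℕ, X ⊆ Y → IsLarge α X → IsLarge α Y) := by
  have main : ∀ X Y : Finset ℕ, X.card ≤ Y.card →
      (∀ i < X.card, (Y.sort (· ≤ ·)).getD i 0 ≤ (X.sort (· ≤ ·)).getD i 0) →
      IsLarge α X → IsLarge α Y := by
    intro X Y hcard hpt hX
    unfold IsLarge at hX ⊢
    refine key (X.sort (· ≤ ·)).length (X.sort (· ≤ ·)) (Y.sort (· ≤ ·)) α α le_rfl
      (Finset.sortedLT_sort X).pairwise (Finset.sortedLT_sort Y).pairwise ?_ ?_ (SubLE.refl α) hX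
    · rw [Finset.length_sort, Finset.length_sort]; exact hcard
    · rw [Finset.length_sort]; exact hpt
  refine ⟨main, ?_⟩
  intro X Y hXY hX
  refine main X Y (Finset.card_le_card hXY) ?_ hX
  have hsub : (X.sort (· ≤ ·)).Sublist (Y.sort (· ≤ ·)) := by
    refine sublist_of_subset_sorted _ _ (Finset.sortedLT_sort X).pairwise
      (Finset.sortedLT_sort Y).pairwise ?_
    intro z hz
    rw [Finset.mem_sort] at hz ⊢
    exact hXY hz
  intro i hi
  refine getD_le_of_sublist hsub (Finset.pairwise_sort Y (· ≤ ·)) i ?_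
  rw [Finset.length_sort]; exact hi
end

section
/- Every ω^3-sparse finite set X ⊆ ℕ with min X ≥ 3 is exp-sparse. More precisely, for natural numbers 3 ≤ x < y: if the interval (x, y] is ω-large then y > 2x; if (x, y] is ω^2-large then y > x·2^x; and if (x, y] is ω^3-large then y > 4^x. -/
/-- A finite set `X ⊆ ℕ` (with `min X ≥ 3`) is exp-sparse if for all `x, y ∈ X`,
`x < y` implies `4^x < y`. -/
def ExpSparse (X : Finset ℕ) : Prop :=
  (∀ x ∈ X, 3 ≤ x) ∧ ∀ x ∈ X, ∀ y ∈ X, x < y → 4 ^ x < y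

/-- A finite set `X ⊆ ℕ` is `α`-sparse if for all `x, y ∈ X` with `x < y`,
the interval `(x, y]` is `α`-large. -/
def SparseFor (α : List ℕ) (X : Finset ℕ) : Prop :=
  ∀ x ∈ X, ∀ y ∈ X, x < y → IsLarge α (Finset.Ioc x y)

namespace KSaux

def gstep (a : ℕ) : ℕ := 2 * a + 2

def hstep (a : ℕ) : ℕ := gstep^[a + 1] (a + 1)

lemma KSstep_cons_cons (a b : ℕ) (l : List ℕ) (m : ℕ) :
    KSstep (a :: b :: l) m = a :: KSstep (b :: l) m := by simp [KSstep]

lemma KSstep_append_zero : ∀ (β : List ℕ) (m : ℕ), KSstep (β ++ [0]) m = β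
  | [], _ => rfl
  | a :: β, m => by
    cases hb : β ++ [0] with
    | nil => simp at hb
    | cons b l =>
      show KSstep (a :: (β ++ [0])) m = a :: β
      rw [hb, KSstep_cons_cons, ← hb, KSstep_append_zero β m]

lemma KSstep_append_succ : ∀ (β : List ℕ) (n m : ℕ),
    KSstep (β ++ [n + 1]) m = β ++ List.replicate m n
  | [], n, m => rfl
  | a :: β, n, m => by
    cases hb : β ++ [n + 1] with
    | nil => simp at hb
    | cons b l =>
      show KSstep (a :: (β ++ [n + 1])) m = a :: (β ++ List.replicate m n)
      rw [hb, KSstep_cons_cons, ← hb, KSstep_append_succ β n m]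

lemma ne_nil_aux (β : List ℕ) (c v : ℕ) (hc : c ≠ 0) : β ++ List.replicate c v ≠ [] := by
  intro h
  apply_fun List.length at h
  simp at h
  omega

lemma foldl_zeros (l : List ℕ) : ∀ (β : List ℕ) (k : ℕ), l.length ≤ k →
    List.foldl KSstep (β ++ List.replicate k 0) l = β ++ List.replicate (k - l.length) 0 := by
  induction l with
  | nil => intro β k _; simp
  | cons m l ih =>
    intro β k h
    have hk1 : 1 ≤ k := le_trans (by simp) h
    obtain ⟨k, rfl⟩ : ∃ k', k = k' + 1 := ⟨k - 1, by omega⟩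
    rw [List.foldl_cons,
      show β ++ List.replicate (k + 1) 0 = (β ++ List.replicate k 0) ++ [0] by
        rw [List.replicate_succ', List.append_assoc],
      KSstep_append_zero, ih β k (by simp only [List.length_cons] at h; omega)]
    have : k - l.length = k + 1 - (m :: l).length := by simp
    rw [this]

lemma foldl_split (α : List ℕ) {a b y : ℕ} (hab : a ≤ b) (hby : b ≤ y) :
    List.foldl KSstep α (List.range' (a + 1) (y - a)) =
      List.foldl KSstep (List.foldl KSstep α (List.range' (a + 1) (b - a)))
        (List.range' (b + 1) (y - b)) := by
  rw [← List.foldl_append]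
  congr 1
  have h := List.range'_append (s := a + 1) (m := b - a) (n := y - b) (step := 1)
  rw [show a + 1 + 1 * (b - a) = b + 1 by omega] at h
  rw [h]
  congr 1
  omega

lemma le_gIter : ∀ (k a : ℕ), a ≤ gstep^[k] a := by
  intro k
  induction k with
  | zero => intro a; simp
  | succ k ih =>
    intro a
    rw [Function.iterate_succ_apply]
    calc a ≤ gstep a := by unfold gstep; omega
    _ ≤ _ := ih (gstep a)

lemma gIter_ge (k a : ℕ) : 2 ^ k * (a + 1) ≤ gstep^[k] a + 1 := by
  induction k with
  | zero => simp
  | succ k ih =>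
    rw [Function.iterate_succ_apply']
    have h2 : (2 : ℕ) ^ (k + 1) * (a + 1) = 2 * (2 ^ k * (a + 1)) := by ring
    rw [show gstep (gstep^[k] a) = 2 * gstep^[k] a + 2 from rfl]
    omega

lemma fold_one (β : List ℕ) (a : ℕ) :
    List.foldl KSstep (β ++ [1]) (List.range' (a + 1) (gstep a - a)) = β := by
  rw [show gstep a - a = (a + 1) + 1 by unfold gstep; omega, List.range'_succ, List.foldl_cons,
    KSstep_append_succ β 0 (a + 1)]
  have h := foldl_zeros (List.range' (a + 1 + 1) (a + 1)) β (a + 1) (by simp)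
  simpa using h

lemma fold_one_ne (β : List ℕ) (a y : ℕ) (h : y < gstep a) :
    List.foldl KSstep (β ++ [1]) (List.range' (a + 1) (y - a)) ≠ [] := by
  rcases le_or_gt y a with hy | hy
  · rw [show y - a = 0 by omega]; simp
  · rw [show y - a = (y - a - 1) + 1 by omega, List.range'_succ, List.foldl_cons,
      KSstep_append_succ β 0 (a + 1),
      foldl_zeros _ β (a + 1) (by unfold gstep at h; simp; omega)]
    apply ne_nil_aux
    unfold gstep at h
    simp
    omega

lemma fold_ones : ∀ (k : ℕ) (β : List ℕ) (a : ℕ),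
    List.foldl KSstep (β ++ List.replicate k 1)
      (List.range' (a + 1) (gstep^[k] a - a)) = β := by
  intro k
  induction k with
  | zero => intro β a; simp
  | succ k ih =>
    intro β a
    rw [Function.iterate_succ_apply,
      foldl_split _ (show a ≤ gstep a by unfold gstep; omega) (le_gIter k (gstep a)),
      show β ++ List.replicate (k + 1) 1 = (β ++ List.replicate k 1) ++ [1] by
        rw [List.replicate_succ', List.append_assoc],
      fold_one]
    exact ih β (gstep a)

lemma fold_ones_ne : ∀ (k : ℕ) (β : List ℕ) (a y : ℕ), y < gstep^[k] a → (k = 0 → β ≠ []) →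
    List.foldl KSstep (β ++ List.replicate k 1) (List.range' (a + 1) (y - a)) ≠ [] := by
  intro k
  induction k with
  | zero =>
    intro β a y hy hβ
    rw [show y - a = 0 by simp at hy; omega]
    simpa using hβ rfl
  | succ k ih =>
    intro β a y hy _
    rcases lt_or_ge y (gstep a) with h1 | h1
    · rw [show β ++ List.replicate (k + 1) 1 = (β ++ List.replicate k 1) ++ [1] by
        rw [List.replicate_succ', List.append_assoc]]
      exact fold_one_ne (β ++ List.replicate k 1) a y h1
    · rw [foldl_split _ (show a ≤ gstep a by unfold gstep; omega) (by omega : gstep a ≤ y),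
        show β ++ List.replicate (k + 1) 1 = (β ++ List.replicate k 1) ++ [1] by
          rw [List.replicate_succ', List.append_assoc],
        fold_one]
      apply ih β (gstep a) y
      · rwa [Function.iterate_succ_apply] at hy
      · intro hk
        exfalso
        rw [Function.iterate_succ_apply, hk, Function.iterate_zero_apply] at hy
        omega

lemma le_hstep (a : ℕ) : a ≤ hstep a := by
  have := le_gIter (a + 1) (a + 1)
  unfold hstep
  omega

lemma fold_two (β : List ℕ) (a : ℕ) :
    List.foldl KSstep (β ++ [2]) (List.range' (a + 1) (hstep a - a)) = β := by
  have ha : a + 1 ≤ hstep a := le_gIter (a + 1) (a + 1)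
  rw [show hstep a - a = (hstep a - (a + 1)) + 1 by omega, List.range'_succ, List.foldl_cons,
    KSstep_append_succ β 1 (a + 1)]
  have h := fold_ones (a + 1) β (a + 1)
  simpa [hstep] using h

lemma fold_two_ne (β : List ℕ) (a y : ℕ) (h : y < hstep a) :
    List.foldl KSstep (β ++ [2]) (List.range' (a + 1) (y - a)) ≠ [] := by
  rcases le_or_gt y a with hy | hy
  · rw [show y - a = 0 by omega]; simp
  · rw [show y - a = (y - (a + 1)) + 1 by omega, List.range'_succ, List.foldl_cons,
      KSstep_append_succ β 1 (a + 1)]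
    exact fold_ones_ne (a + 1) β (a + 1) y (by simpa [hstep] using h) (by simp)

lemma fold_twos_ne : ∀ (k : ℕ) (β : List ℕ) (a y : ℕ), y < hstep^[k] a → (k = 0 → β ≠ []) →
    List.foldl KSstep (β ++ List.replicate k 2) (List.range' (a + 1) (y - a)) ≠ [] := by
  intro k
  induction k with
  | zero =>
    intro β a y hy hβ
    rw [show y - a = 0 by simp at hy; omega]
    simpa using hβ rfl
  | succ k ih =>
    intro β a y hy _
    rcases lt_or_ge y (hstep a) with h1 | h1
    · rw [show β ++ List.replicate (k + 1) 2 = (β ++ List.replicate k 2) ++ [2] by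
        rw [List.replicate_succ', List.append_assoc]]
      exact fold_two_ne (β ++ List.replicate k 2) a y h1
    · rw [foldl_split _ (le_hstep a) (by omega : hstep a ≤ y),
        show β ++ List.replicate (k + 1) 2 = (β ++ List.replicate k 2) ++ [2] by
          rw [List.replicate_succ', List.append_assoc],
        fold_two]
      apply ih β (hstep a) y
      · rwa [Function.iterate_succ_apply] at hy
      · intro hk
        exfalso
        rw [Function.iterate_succ_apply, hk, Function.iterate_zero_apply] at hy
        omega

lemma hstep_ge (a : ℕ) : 2 ^ (a + 1) ≤ hstep a + 1 := by
  have h := gIter_ge (a + 1) (a + 1)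
  have h2 : 2 ^ (a + 1) ≤ 2 ^ (a + 1) * (a + 1 + 1) := Nat.le_mul_of_pos_right _ (by omega)
  unfold hstep
  omega

lemma le_hIter : ∀ (k a : ℕ), a ≤ hstep^[k] a := by
  intro k
  induction k with
  | zero => intro a; simp
  | succ k ih =>
    intro a
    rw [Function.iterate_succ_apply]
    exact le_trans (le_hstep a) (ih (hstep a))

lemma sort_Ioc (x y : ℕ) :
    (Finset.Ioc x y).sort (· ≤ ·) = List.range' (x + 1) (y - x) := by
  apply List.Perm.eq_of_pairwise' (Finset.pairwise_sort _ _)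
    ((List.pairwise_lt_range' 1).imp le_of_lt)
  rw [← Multiset.coe_eq_coe, Finset.sort_eq, Nat.Ioc_eq_range']

lemma hIter_big (x : ℕ) (hx : 3 ≤ x) : 4 ^ x < hstep^[x + 1] (x + 1) := by
  obtain ⟨k, rfl⟩ : ∃ k, x = k + 3 := ⟨x - 3, by omega⟩
  have e : hstep^[k + 3 + 1] (k + 3 + 1) = hstep (hstep (hstep^[k + 2] (k + 4))) := by
    rw [show k + 3 + 1 = 2 + (k + 2) by omega, Function.iterate_add_apply]
    rfl
  have hb1 : k + 4 ≤ hstep^[k + 2] (k + 4) := le_hIter _ _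
  set b := hstep^[k + 2] (k + 4) with hbdef
  have h1 : 2 ^ (b + 1) ≤ hstep b + 1 := hstep_ge b
  set c := hstep b with hcdef
  have hpow : 2 ^ (k + 5) ≤ 2 ^ (b + 1) := Nat.pow_le_pow_right (by norm_num) (by omega)
  have hk2 : k < 2 ^ k := Nat.lt_two_pow_self
  have hk32 : (2 : ℕ) ^ (k + 5) = 32 * 2 ^ k := by rw [pow_add]; ring
  have hc : 2 * (k + 3) + 2 ≤ c + 1 := by omega
  have h2 : 2 ^ (c + 1) ≤ hstep c + 1 := hstep_ge c
  have h5 : 2 ^ (2 * (k + 3) + 2) ≤ 2 ^ (c + 1) :=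
    Nat.pow_le_pow_right (by norm_num) (by omega)
  have h6 : (2 : ℕ) ^ (2 * (k + 3) + 2) = 4 * 4 ^ (k + 3) := by
    rw [show 2 * (k + 3) + 2 = 2 * (k + 4) by ring, pow_mul]
    norm_num
    rw [pow_succ]
    ring
  have h7 : 1 ≤ 4 ^ (k + 3) := Nat.one_le_pow _ _ (by norm_num)
  rw [e]
  omega

lemma part1 (x y : ℕ) (hxy : x < y) (hL : IsLarge [1] (Finset.Ioc x y)) : 2 * x < y := by
  by_contra h
  push_neg at h
  have hne := fold_ones_ne 1 [] x y
    (by simp only [Function.iterate_one]; unfold gstep; omega) (by simp)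
  simp only [List.nil_append, List.replicate_one] at hne
  exact hne (by simpa [IsLarge, sort_Ioc] using hL)

lemma part2 (x y : ℕ) (hxy : x < y) (hL : IsLarge [2] (Finset.Ioc x y)) : x * 2 ^ x < y := by
  have hy : hstep x ≤ y := by
    by_contra h
    push_neg at h
    have hne := fold_twos_ne 1 [] x y (by simpa using h) (by simp)
    simp only [List.nil_append, List.replicate_one] at hne
    exact hne (by simpa [IsLarge, sort_Ioc] using hL)
  have h1 : 2 ^ (x + 1) * (x + 1 + 1) ≤ hstep x + 1 := gIter_ge (x + 1) (x + 1)
  have h2 : (1 : ℕ) ≤ 2 ^ x := Nat.one_le_two_pow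
  have hkey : 2 ^ (x + 1) * (x + 1 + 1) = x * 2 ^ x + x * 2 ^ x + 4 * 2 ^ x := by ring
  omega

lemma part3 (x y : ℕ) (hx : 3 ≤ x) (hxy : x < y) (hL : IsLarge [3] (Finset.Ioc x y)) :
    4 ^ x < y := by
  have hfold : List.foldl KSstep [3] (List.range' (x + 1) (y - x)) = [] := by
    simpa [IsLarge, sort_Ioc] using hL
  rw [show y - x = (y - (x + 1)) + 1 by omega, List.range'_succ, List.foldl_cons,
    show KSstep [3] (x + 1) = List.replicate (x + 1) 2 from KSstep_append_succ [] 2 (x + 1)]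
    at hfold
  have hy : hstep^[x + 1] (x + 1) ≤ y := by
    by_contra h
    push_neg at h
    have hne := fold_twos_ne (x + 1) [] (x + 1) y h (by omega)
    simp only [List.nil_append] at hne
    exact hne hfold
  exact lt_of_lt_of_le (hIter_big x hx) hy

end KSaux

/-- Every `ω³`-sparse finite set `X ⊆ ℕ` with `min X ≥ 3` is exp-sparse.  More
precisely, for natural numbers `3 ≤ x < y`: if the interval `(x, y]` is `ω`-large then
`y > 2x`; if `(x, y]` is `ω²`-large then `y > x·2^x`; and if `(x, y]` is `ω³`-large
then `y > 4^x`. -/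
theorem expSparse_of_sparse_omega_cube :
    (∀ X : Finset ℕ, (∀ x ∈ X, 3 ≤ x) → SparseFor [3] X → ExpSparse X) ∧
    (∀ x y : ℕ, 3 ≤ x → x < y → IsLarge [1] (Finset.Ioc x y) → 2 * x < y) ∧
    (∀ x y : ℕ, 3 ≤ x → x < y → IsLarge [2] (Finset.Ioc x y) → x * 2 ^ x < y) ∧
    (∀ x y : ℕ, 3 ≤ x → x < y → IsLarge [3] (Finset.Ioc x y) → 4 ^ x < y) := by
  refine ⟨?_, fun x y _ h2 h3 => KSaux.part1 x y h2 h3,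
    fun x y _ h2 h3 => KSaux.part2 x y h2 h3,
    fun x y h1 h2 h3 => KSaux.part3 x y h1 h2 h3⟩
  intro X h3 hsp
  exact ⟨h3, fun x hx y hy hxy => KSaux.part3 x y (h3 x hx) hxy (hsp x hx y hy hxy)⟩
end

section
/- Let n, m ∈ ℕ. If X ⊆ ℕ is a finite set which is (ω^{n+m}+1)-large and min X ≥ 3, then there exists Y ⊆ X such that Y is ω^n-large and ω^m-sparse. In particular, if X is (ω^{n+3}+1)-large and min X ≥ 3, then there exists Y ⊆ X such that Y is ω^n-large and exp-sparse. -/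
namespace KS

abbrev Kills (γ L : List ℕ) : Prop := L.foldl KSstep γ = []

lemma ksstep_nil (x : ℕ) : KSstep [] x = [] := rfl
lemma ksstep_zero (x : ℕ) : KSstep [0] x = [] := rfl
lemma ksstep_succ (k x : ℕ) : KSstep [k+1] x = List.replicate x k := rfl
lemma ksstep_cons (a b : ℕ) (l : List ℕ) (x : ℕ) :
    KSstep (a :: b :: l) x = a :: KSstep (b :: l) x := by cases a <;> rfl

lemma kills_nil_iff (γ : List ℕ) : Kills γ [] ↔ γ = [] := Iff.rfl

lemma kills_cons (γ : List ℕ) (x : ℕ) (L : List ℕ) :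
    Kills γ (x :: L) ↔ Kills (KSstep γ x) L := Iff.rfl

lemma kills_absorb (L : List ℕ) : Kills [] L := by
  induction L with
  | nil => rfl
  | cons x L ih => simpa [Kills, ksstep_nil] using ih

lemma ksstep_append (α β : List ℕ) (x : ℕ) (hβ : β ≠ []) :
    KSstep (α ++ β) x = α ++ KSstep β x := by
  induction α with
  | nil => simp
  | cons a α ih =>
    have h1 : α ++ β ≠ [] := fun hc => hβ (List.append_eq_nil_iff.mp hc).2
    obtain ⟨b, l, hbl⟩ := List.exists_cons_of_ne_nil h1
    rw [List.cons_append, hbl, ksstep_cons, ← hbl, ih, List.cons_append]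

lemma kills_split : ∀ (L β α : List ℕ), Kills (α ++ β) L →
    ∃ P Q, L = P ++ Q ∧ Kills β P ∧ Kills α Q := by
  intro L
  induction L with
  | nil =>
    intro β α h
    rw [kills_nil_iff, List.append_eq_nil_iff] at h
    exact ⟨[], [], rfl, by simp [kills_nil_iff, h.2], by simp [kills_nil_iff, h.1]⟩
  | cons x L ih =>
    intro β α h
    by_cases hβ : β = []
    · subst hβ
      exact ⟨[], x :: L, rfl, rfl, by simpa using h⟩
    · rw [kills_cons, ksstep_append _ _ _ hβ] at h
      obtain ⟨P, Q, rfl, h1, h2⟩ := ih _ _ h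
      exact ⟨x :: P, Q, rfl, h1, h2⟩

def Reach (y : ℕ) : List ℕ → List ℕ → Prop :=
  Relation.ReflTransGen (fun γ δ => ∃ x ≤ y, δ = KSstep γ x)

lemma Reach.rfl {y : ℕ} {γ : List ℕ} : Reach y γ γ := Relation.ReflTransGen.refl

lemma ksstep_zero_arg (γ : List ℕ) : KSstep γ 0 = γ.dropLast := by
  match γ with
  | [] => rfl
  | [0] => rfl
  | [Nat.succ n] => rfl
  | a :: b :: l =>
    rw [ksstep_cons, ksstep_zero_arg (b :: l), List.dropLast_cons₂]

lemma reach_nil_aux (y : ℕ) : ∀ (n : ℕ) (γ : List ℕ), γ.length ≤ n → Reach y γ [] := by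
  intro n
  induction n with
  | zero =>
    intro γ hγ
    rw [Nat.le_zero, List.length_eq_zero_iff] at hγ
    subst hγ; exact Reach.rfl
  | succ n ih =>
    intro γ hγ
    have h0 : Reach y γ (KSstep γ 0) :=
      Relation.ReflTransGen.single ⟨0, Nat.zero_le _, rfl⟩
    refine h0.trans (ih _ ?_)
    rw [ksstep_zero_arg, List.length_dropLast]
    omega

lemma reach_nil (y : ℕ) (γ : List ℕ) : Reach y γ [] :=
  reach_nil_aux y γ.length γ le_rfl

lemma reach_cons {y a : ℕ} {τ σ : List ℕ} (h : Reach y τ σ) : Reach y (a :: τ) (a :: σ) := by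
  induction h with
  | refl => exact Reach.rfl
  | @tail b c _ hs ih =>
    obtain ⟨x, hx, rfl⟩ := hs
    cases b with
    | nil => simpa [ksstep_nil] using ih
    | cons u v => exact ih.tail ⟨x, hx, by rw [ksstep_cons]⟩

lemma reach_nil_left {y : ℕ} {δ : List ℕ} (h : Reach y [] δ) : δ = [] := by
  induction h with
  | refl => rfl
  | tail _ hs ih => obtain ⟨x, _, rfl⟩ := hs; rw [ih, ksstep_nil]

lemma replicate_succ_cons (j : ℕ) (k : ℕ) :
    List.replicate (j+1) k = k :: List.replicate j k := rfl

lemma ksstep_replicate_zero (j x : ℕ) :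
    KSstep (List.replicate (j+1) 0) x = List.replicate j 0 := by
  induction j with
  | zero => rfl
  | succ j ih =>
    rw [replicate_succ_cons (j+1), replicate_succ_cons j, ksstep_cons,
      ← replicate_succ_cons j, ih]
    rfl

lemma ksstep_replicate_succ (c k x : ℕ) :
    KSstep (List.replicate (c+1) (k+1)) x
      = List.replicate c (k+1) ++ List.replicate x k := by
  induction c with
  | zero => simp [replicate_succ_cons, ksstep_succ]
  | succ c ih =>
    rw [replicate_succ_cons (c+1), replicate_succ_cons c, ksstep_cons,
      ← replicate_succ_cons c, ih, replicate_succ_cons c (k+1), List.cons_append]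

lemma reach_one_less {x k a : ℕ} :
    Reach x (List.replicate (a+1) k) (List.replicate a k) :=
  Relation.ReflTransGen.single ⟨0, Nat.zero_le _, by
    rw [ksstep_zero_arg, List.dropLast_replicate, Nat.add_sub_cancel]⟩

lemma reach_replicate_down {x k : ℕ} : ∀ {a b : ℕ}, b ≤ a →
    Reach x (List.replicate a k) (List.replicate b k) := by
  intro a
  induction a with
  | zero => intro b hb; rw [Nat.le_zero] at hb; subst hb; exact Reach.rfl
  | succ a ih =>
    intro b hb
    rcases Nat.eq_or_lt_of_le hb with rfl | hlt
    · exact Reach.rfl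
    · exact reach_one_less.trans (ih (Nat.lt_succ_iff.mp hlt))

lemma reach_swap (γ : List ℕ) (z x : ℕ) (hzx : z ≤ x) :
    Reach x (KSstep γ x) (KSstep (KSstep γ z) x) := by
  induction γ with
  | nil => rw [ksstep_nil, ksstep_nil, ksstep_nil]; exact Reach.rfl
  | cons a tail ih =>
    cases tail with
    | nil =>
      cases a with
      | zero => rw [ksstep_zero, ksstep_zero, ksstep_nil]; exact Reach.rfl
      | succ k =>
        simp only [ksstep_succ]
        cases z with
        | zero =>
          rw [show List.replicate 0 k = ([] : List ℕ) from rfl, ksstep_nil]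
          exact reach_nil _ _
        | succ w =>
          exact (reach_replicate_down hzx).tail ⟨x, le_refl x, rfl⟩
    | cons b l =>
      rw [ksstep_cons, ksstep_cons]
      cases hu : KSstep (b :: l) z with
      | nil =>
        rw [hu, ksstep_nil] at ih
        have h2 : Reach x (a :: KSstep (b :: l) x) [a] := reach_cons ih
        exact h2.tail ⟨x, le_refl x, rfl⟩
      | cons u v =>
        rw [ksstep_cons]
        rw [hu] at ih
        exact reach_cons ih

lemma reach_step_mono {y x : ℕ} {γ δ : List ℕ} (h : Reach y γ δ) (hyx : y ≤ x) :
    Reach x (KSstep γ x) (KSstep δ x) := by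
  induction h with
  | refl => exact Reach.rfl
  | tail _ hs ih =>
    obtain ⟨z, hz, rfl⟩ := hs
    exact ih.trans (reach_swap _ z x (hz.trans hyx))

lemma kills_of_reach : ∀ (L : List ℕ) (y : ℕ) (γ δ : List ℕ), Reach y γ δ →
    (∀ i ∈ L, y ≤ i) → List.Pairwise (· ≤ ·) L → Kills γ L → Kills δ L := by
  intro L
  induction L with
  | nil =>
    intro y γ δ h _ _ hk
    rw [kills_nil_iff] at hk ⊢
    subst hk
    exact reach_nil_left h
  | cons x L ih =>
    intro y γ δ h hy hs hk
    rw [kills_cons] at hk ⊢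
    refine ih x _ _ (reach_step_mono h (hy x (by simp))) ?_ hs.of_cons hk
    intro i hi
    exact (List.pairwise_cons.mp hs).1 i hi

lemma kills_sublist : ∀ (M L : List ℕ), L.Sublist M → List.Pairwise (· ≤ ·) M →
    ∀ γ, Kills γ L → Kills γ M := by
  intro M
  induction M with
  | nil => intro L h _ γ hk; rw [List.sublist_nil] at h; subst h; exact hk
  | cons x M ih =>
    intro L h hs γ hk
    cases h with
    | cons _ h' =>
      have h1 : Kills γ M := ih _ h' hs.of_cons _ hk
      rw [kills_cons]
      refine kills_of_reach M x γ (KSstep γ x)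
        (Relation.ReflTransGen.single ⟨x, le_refl x, rfl⟩) ?_ hs.of_cons h1
      intro i hi
      exact (List.pairwise_cons.mp hs).1 i hi
    | cons_cons _ h' =>
      rw [kills_cons] at hk ⊢
      exact ih _ h' hs.of_cons _ hk

lemma kills_append : ∀ (L₁ β α L₂ : List ℕ),
    List.Pairwise (· ≤ ·) (L₁ ++ L₂) → Kills β L₁ → Kills α L₂ →
    Kills (α ++ β) (L₁ ++ L₂) := by
  intro L₁
  induction L₁ with
  | nil =>
    intro β α L₂ _ h1 h2
    rw [kills_nil_iff] at h1
    subst h1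
    simpa using h2
  | cons x L₁ ih =>
    intro β α L₂ hs h1 h2
    by_cases hβ : β = []
    · subst hβ
      have h3 : Kills α (x :: L₁ ++ L₂) :=
        kills_sublist _ _ (List.sublist_append_right _ _) hs _ h2
      simpa using h3
    · rw [kills_cons] at h1
      rw [List.cons_append, kills_cons, ksstep_append _ _ _ hβ]
      exact ih _ _ _ hs.of_cons h1 h2


lemma kills_down_prefix : ∀ (j i : ℕ), i ≤ j → ∀ (L : List ℕ), List.Pairwise (· ≤ ·) L →
    Kills [j] L → ∃ P Q, L = P ++ Q ∧ Kills [i] P := by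
  intro j
  induction j with
  | zero =>
    intro i hi L _ hk
    rw [Nat.le_zero] at hi; subst hi
    exact ⟨L, [], by simp, hk⟩
  | succ j ih =>
    intro i hi L hs hk
    rcases Nat.eq_or_lt_of_le hi with rfl | hlt
    · exact ⟨L, [], by simp, hk⟩
    · have hij : i ≤ j := Nat.lt_succ_iff.mp hlt
      cases L with
      | nil => exact absurd hk (by simp [kills_nil_iff])
      | cons x L =>
        rw [kills_cons, ksstep_succ] at hk
        cases x with
        | zero =>
          refine ⟨[0], L, rfl, ?_⟩
          show Kills (KSstep [i] 0) []
          cases i with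
          | zero => rfl
          | succ i' => rw [ksstep_succ]; rfl
        | succ w =>
          have : List.replicate (w+1) j = List.replicate w j ++ [j] := by
            rw [← List.replicate_succ' (n := w) (a := j)]
          rw [this] at hk
          obtain ⟨A, B, rfl, hA, _⟩ := kills_split _ _ _ hk
          have hsA : List.Pairwise (· ≤ ·) A :=
            ((hs.of_cons).sublist (List.sublist_append_left _ _))
          obtain ⟨P, Q, rfl, hP⟩ := ih i hij A hsA hA
          refine ⟨(w+1) :: P, Q ++ B, by simp, ?_⟩
          have hsxP : List.Pairwise (· ≤ ·) ((w+1) :: P) := by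
            have : ((w+1) :: P).Sublist ((w+1) :: (P ++ Q ++ B)) := by
              refine List.Sublist.cons₂ _ ?_
              exact (List.sublist_append_left _ _).trans (List.sublist_append_left _ _)
            exact hs.sublist this
          exact kills_sublist _ _ (List.Sublist.cons _ (List.Sublist.refl P)) hsxP _ hP

lemma ksstep_length (γ : List ℕ) (x : ℕ) : γ.length ≤ (KSstep γ x).length + 1 := by
  match γ with
  | [] => simp
  | [0] => simp [ksstep_zero]
  | [Nat.succ n] => simp [ksstep_succ]
  | a :: b :: l =>
    rw [ksstep_cons]
    have := ksstep_length (b :: l) x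
    simpa using this

lemma kills_length : ∀ (L γ : List ℕ), Kills γ L → γ.length ≤ L.length := by
  intro L
  induction L with
  | nil => intro γ hk; rw [kills_nil_iff] at hk; subst hk; simp
  | cons x L ih =>
    intro γ hk
    rw [kills_cons] at hk
    have h1 := ih _ hk
    have h2 := ksstep_length γ x
    simp only [List.length_cons]
    omega

lemma kills_head_length {j a : ℕ} {L : List ℕ} (hj : 1 ≤ j) (hk : Kills [j] (a :: L)) :
    a ≤ L.length := by
  obtain ⟨j', rfl⟩ := Nat.exists_eq_add_of_le hj
  rw [kills_cons] at hk
  rw [show 1 + j' = j' + 1 by omega, ksstep_succ] at hk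
  have := kills_length _ _ hk
  simpa using this

lemma kills_ne_nil {j : ℕ} {L : List ℕ} (hk : Kills [j] L) : L ≠ [] := by
  intro h; subst h; rw [kills_nil_iff] at hk; exact absurd hk (by simp)

lemma zkill : ∀ (j : ℕ) (L : List ℕ), j ≤ L.length → Kills (List.replicate j 0) L := by
  intro j
  induction j with
  | zero => intro L _; exact kills_absorb L
  | succ j ih =>
    intro L hL
    cases L with
    | nil => simp at hL
    | cons x L =>
      rw [kills_cons, ksstep_replicate_zero]
      exact ih L (by simpa using hL)

/-- In a strictly increasing list `a :: T` there is an element `≥ a + T.length`. -/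
lemma exists_big : ∀ (T : List ℕ) (a : ℕ), List.Chain' (· < ·) (a :: T) →
    ∃ w ∈ a :: T, a + T.length ≤ w := by
  intro T
  induction T with
  | nil => intro a _; exact ⟨a, by simp⟩
  | cons b T ih =>
    intro a hc
    have hab : a < b := List.isChain_cons_cons.mp hc |>.1
    obtain ⟨w, hw, hwl⟩ := ih b (List.isChain_cons_cons.mp hc).2
    refine ⟨w, List.mem_cons_of_mem _ hw, ?_⟩
    simp only [List.length_cons]
    omega

lemma le_getLast : ∀ (L : List ℕ) (hL : L ≠ []), List.Pairwise (· < ·) L →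
    ∀ s ∈ L, s ≤ L.getLast hL := by
  intro L
  induction L with
  | nil => simp
  | cons x L ih =>
    intro _ hp s hs
    cases L with
    | nil => simp at hs; simp [hs]
    | cons b M =>
      rw [List.getLast_cons (by simp)]
      rcases List.mem_cons.mp hs with rfl | hs'
      · have hlt : s < b := (List.pairwise_cons.mp hp).1 b (by simp)
        have := ih (by simp) (List.pairwise_cons.mp hp).2 b (by simp)
        omega
      · exact ih (by simp) (List.pairwise_cons.mp hp).2 s hs'

lemma sublist_of_subset_sorted : ∀ (M L : List ℕ), List.Pairwise (· < ·) L →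
    List.Pairwise (· < ·) M → (∀ x ∈ L, x ∈ M) → L.Sublist M := by
  intro M
  induction M with
  | nil =>
    intro L _ _ hsub
    cases L with
    | nil => exact List.Sublist.refl []
    | cons a L => exact absurd (hsub a (by simp)) (by simp)
  | cons b M ih =>
    intro L hL hM hsub
    cases L with
    | nil => exact List.nil_sublist _
    | cons a L =>
      by_cases hab : a = b
      · subst hab
        refine List.Sublist.cons₂ _ (ih L (List.pairwise_cons.mp hL).2 (List.pairwise_cons.mp hM).2 ?_)
        intro x hx
        have hax : a < x := (List.pairwise_cons.mp hL).1 x hx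
        rcases List.mem_cons.mp (hsub x (by simp [hx])) with rfl | h
        · omega
        · exact h
      · refine List.Sublist.cons _ (ih (a :: L) hL (List.pairwise_cons.mp hM).2 ?_)
        intro x hx
        rcases List.mem_cons.mp (hsub x hx) with rfl | h
        · -- x = b ∈ a :: L; b < everything in M, and a ∈ b :: M with a ≠ b so b < a
          have haM : a ∈ M := by
            rcases List.mem_cons.mp (hsub a (by simp)) with rfl | h2
            · exact absurd rfl hab
            · exact h2
          have hba : x < a := (List.pairwise_cons.mp hM).1 a haM
          rcases List.mem_cons.mp hx with rfl | hxL
          · omega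
          · have : a < x := (List.pairwise_cons.mp hL).1 x hxL
            omega
        · exact h

def IocK (m u v : ℕ) : Prop := Kills [m] ((Finset.Ioc u v).sort (· ≤ ·))

lemma sort_pairwise_lt (s : Finset ℕ) : List.Pairwise (· < ·) (s.sort (· ≤ ·)) :=
  s.sortedLT_sort.pairwise

lemma certIoc {j m u v : ℕ} (S : List ℕ) (hS : Kills [j] S) (hmj : m ≤ j)
    (hsort : List.Pairwise (· < ·) S) (hb : ∀ s ∈ S, u < s ∧ s ≤ v) : IocK m u v := by
  obtain ⟨P, Q, rfl, hP⟩ :=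
    kills_down_prefix j m hmj S (hsort.imp le_of_lt) hS
  have hPsub : P.Sublist ((Finset.Ioc u v).sort (· ≤ ·)) := by
    refine sublist_of_subset_sorted _ _ (hsort.sublist (List.sublist_append_left _ _))
      (sort_pairwise_lt _) ?_
    intro x hx
    rw [Finset.mem_sort, Finset.mem_Ioc]
    exact hb x (by simp [hx])
  exact kills_sublist _ _ hPsub ((sort_pairwise_lt _).imp le_of_lt) _ hP

lemma iock_mono {m u u' v : ℕ} (h : u' ≤ u) (hk : IocK m u v) : IocK m u' v := by
  refine kills_sublist _ _ ?_ ((sort_pairwise_lt _).imp le_of_lt) _ hk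
  refine sublist_of_subset_sorted _ _ (sort_pairwise_lt _) (sort_pairwise_lt _) ?_
  intro x hx
  rw [Finset.mem_sort, Finset.mem_Ioc] at hx ⊢
  omega

lemma iock_zero {u v : ℕ} (h : u < v) : IocK 0 u v := by
  have hv : v ∈ (Finset.Ioc u v).sort (· ≤ ·) := by
    rw [Finset.mem_sort, Finset.mem_Ioc]; omega
  unfold IocK
  cases hL : (Finset.Ioc u v).sort (· ≤ ·) with
  | nil => rw [hL] at hv; simp at hv
  | cons w R => rw [kills_cons, ksstep_zero]; exact kills_absorb R

lemma chain_append_all {r : ℕ → ℕ → Prop} : ∀ (l₁ : List ℕ) (a b : ℕ) (l₂ : List ℕ),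
    List.Chain r a l₁ → (∀ w ∈ a :: l₁, r w b) → List.Chain r b l₂ →
    List.Chain r a (l₁ ++ b :: l₂) := by
  intro l₁
  induction l₁ with
  | nil => intro a b l₂ _ hall h2; exact List.Chain.cons (hall a (by simp)) h2
  | cons c l ih =>
    intro a b l₂ h1 hall h2
    replace h1 := List.chain_cons.mp h1
    exact List.Chain.cons h1.1 (ih c b l₂ h1.2 (fun w hw => hall w (by
      rcases List.mem_cons.mp hw with rfl | hw'
      · simp
      · simp [hw'])) h2)

lemma chain_first_all {m : ℕ} : ∀ (l : List ℕ) (a : ℕ), List.Chain (IocK m) a l →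
    List.Pairwise (· < ·) (a :: l) → ∀ v ∈ l, IocK m a v := by
  intro l
  induction l with
  | nil => simp
  | cons b l ih =>
    intro a hc hp v hv
    replace hc := List.chain_cons.mp hc
    rcases List.mem_cons.mp hv with rfl | hv'
    · exact hc.1
    · have hab : a ≤ b := le_of_lt ((List.pairwise_cons.mp hp).1 b (by simp))
      exact iock_mono hab (ih b hc.2 (List.pairwise_cons.mp hp).2 v hv')

lemma chain_pairs {m : ℕ} : ∀ (l : List ℕ) (a : ℕ), List.Chain (IocK m) a l →
    List.Pairwise (· < ·) (a :: l) →
    ∀ u ∈ a :: l, ∀ v ∈ a :: l, u < v → IocK m u v := by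
  intro l
  induction l with
  | nil => intro a _ _ u hu v hv huv; simp at hu hv; omega
  | cons b l ih =>
    intro a hc hp u hu v hv huv
    replace hc := List.chain_cons.mp hc
    rcases List.mem_cons.mp hu with hua | hu'
    · subst hua
      rcases List.mem_cons.mp hv with hva | hv'
      · omega
      · exact chain_first_all _ u (List.chain_cons.mpr hc) hp v hv'
    · have hv' : v ∈ b :: l := by
        rcases List.mem_cons.mp hv with hva | h
        · exfalso
          have h2 : a < u := (List.pairwise_cons.mp hp).1 u hu'
          omega
        · exact h
      exact ih b hc.2 (List.pairwise_cons.mp hp).2 u hu' v hv' huv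

lemma toFinset_sort_eq {l : List ℕ} (hl : List.Pairwise (· < ·) l) :
    l.toFinset.sort (· ≤ ·) = l := by
  have hnd : l.Nodup := hl.imp (fun h => ne_of_lt h)
  have hperm : (l.toFinset.sort (· ≤ ·)).Perm l := by
    refine (Finset.sort_perm_toList _ _).trans ?_
    exact List.toFinset_toList hnd
  exact List.Perm.eq_of_pairwise' (Finset.pairwise_sort _ _) (hl.imp le_of_lt) hperm

lemma picks (m : ℕ) : ∀ (c : ℕ) (L : List ℕ) (prev : ℕ),
    List.Pairwise (· < ·) L → (∀ x ∈ L, prev < x) →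
    Kills (List.replicate c m) L →
    ∃ P, P.Sublist L ∧ P.length = c ∧ List.Chain (IocK m) prev P := by
  intro c
  induction c with
  | zero => intro L prev _ _ _; exact ⟨[], List.nil_sublist _, rfl, List.Chain.nil⟩
  | succ c ih =>
    intro L prev hp hprev hk
    rw [List.replicate_succ' (n := c) (a := m)] at hk
    obtain ⟨C, R, rfl, hC, hR⟩ := kills_split _ _ _ hk
    have hCne : C ≠ [] := kills_ne_nil hC
    set p := C.getLast hCne with hp_def
    have hpC : p ∈ C := List.getLast_mem hCne
    have hCpair : List.Pairwise (· < ·) C := hp.sublist (List.sublist_append_left _ _)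
    have hcross : ∀ a ∈ C, ∀ b ∈ R, a < b := (List.pairwise_append.mp hp).2.2
    obtain ⟨P', hsub, hlen, hchain⟩ := ih R p
      (hp.sublist (List.sublist_append_right _ _))
      (fun x hx => hcross p hpC x hx) hR
    refine ⟨p :: P', ?_, by simp [hlen], ?_⟩
    · refine List.Sublist.append (List.singleton_sublist.mpr hpC) hsub
    · refine List.Chain.cons ?_ hchain
      refine certIoc C hC le_rfl hCpair ?_
      intro s hs
      exact ⟨hprev s (by simp [hs]), le_getLast C hCne hCpair s hs⟩

set_option maxHeartbeats 1000000 in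
lemma MLB (m : ℕ) (hm : 1 ≤ m) : ∀ (k : ℕ), ∀ (c : ℕ), ∀ (h : ℕ) (L : List ℕ),
    1 ≤ k → 3 ≤ h → List.Pairwise (· < ·) L → (∀ x ∈ L, h + 4 ≤ x) →
    Kills (List.replicate c (k + m)) L →
    ∃ Y, Y.Sublist L ∧ Kills (List.replicate c k) (h :: Y) ∧ List.Chain (IocK m) h Y := by
  intro k
  induction k with
  | zero => intro c h L hk; omega
  | succ k' ihk =>
    intro c
    induction c with
    | zero =>
      intro h L _ _ _ _ _
      exact ⟨[], List.nil_sublist _, kills_absorb [h], List.Chain.nil⟩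
    | succ c ihc =>
      intro h L _ hh hp hlow hkill
      have hj1 : 1 ≤ k' + m := by omega
      -- split off the first block Q
      rw [List.replicate_succ'] at hkill
      obtain ⟨Q, L₂, rfl, hQ, hL₂⟩ := kills_split _ _ _ hkill
      obtain ⟨B, Sseq, rfl⟩ := List.exists_cons_of_ne_nil (kills_ne_nil hQ)
      have hB : h + 4 ≤ B := hlow B (by simp)
      rw [kills_cons] at hQ
      rw [show k' + 1 + m = (k' + m) + 1 by omega, ksstep_succ] at hQ
      -- carve pieces out of Sseq
      rw [show B = (B - (h+4)) + (h+4) by omega, List.replicate_add] at hQ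
      obtain ⟨P5, IGN, rfl, hP5, _⟩ := kills_split _ _ _ hQ
      rw [show h + 4 = (h+3) + 1 from rfl, List.replicate_succ'] at hP5
      obtain ⟨S₁, R₁, rfl, hS₁, hR₁⟩ := kills_split _ _ _ hP5
      rw [show h + 3 = (h+2) + 1 from rfl, List.replicate_succ'] at hR₁
      obtain ⟨S₂, R₂, rfl, hS₂, hR₂⟩ := kills_split _ _ _ hR₁
      rw [show h + 2 = 2 + h by omega, List.replicate_add] at hR₂
      obtain ⟨MAT, R₃, rfl, hMAT, hR₃⟩ := kills_split _ _ _ hR₂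
      rw [show (List.replicate 2 (k'+m)) = [k'+m] ++ [k'+m] from rfl] at hR₃
      obtain ⟨SP, HS, rfl, hSP, hHS⟩ := kills_split _ _ _ hR₃
      -- pairwise decomposition
      have A0 := List.pairwise_append.mp hp
      have crossQL₂ := A0.2.2
      have hpL₂ := A0.2.1
      have hpQ := A0.1
      have hpSseq : List.Pairwise (· < ·) (((S₁ ++ (S₂ ++ (MAT ++ (SP ++ HS)))) ++ IGN)) :=
        (List.pairwise_cons.mp hpQ).2
      have A1 := List.pairwise_append.mp hpSseq
      have A2 := List.pairwise_append.mp A1.1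
      have hpS₁ := A2.1
      have crossS₁R₁ := A2.2.2
      have A3 := List.pairwise_append.mp A2.2.1
      have hpS₂ := A3.1
      have crossS₂Rest := A3.2.2
      have A4 := List.pairwise_append.mp A3.2.1
      have hpMAT := A4.1
      have crossMATR₃ := A4.2.2
      have A5 := List.pairwise_append.mp A4.2.1
      have hpSP := A5.1
      have hpHS := A5.2.1
      have crossSPHS := A5.2.2
      -- names for the two harvested heads
      obtain ⟨h', S₂t, rfl⟩ := List.exists_cons_of_ne_nil (kills_ne_nil hS₂)
      obtain ⟨h₂, HSt, rfl⟩ := List.exists_cons_of_ne_nil (kills_ne_nil hHS)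
      -- membership helpers
      have memQ : ∀ x : ℕ, (x = B ∨ x ∈ S₁ ∨ x ∈ h' :: S₂t ∨ x ∈ MAT ∨ x ∈ SP ∨
          x ∈ h₂ :: HSt ∨ x ∈ IGN) →
          x ∈ (B :: ((S₁ ++ ((h' :: S₂t) ++ (MAT ++ (SP ++ (h₂ :: HSt))))) ++ IGN)) := by
        intro x hx
        simp only [List.mem_append, List.mem_cons, or_assoc] at hx ⊢
        tauto
      have memL : ∀ x : ℕ, (x = B ∨ x ∈ S₁ ∨ x ∈ h' :: S₂t ∨ x ∈ MAT ∨ x ∈ SP ∨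
          x ∈ h₂ :: HSt ∨ x ∈ IGN ∨ x ∈ L₂) →
          x ∈ (B :: ((S₁ ++ ((h' :: S₂t) ++ (MAT ++ (SP ++ (h₂ :: HSt))))) ++ IGN)) ++ L₂ := by
        intro x hx
        simp only [List.mem_append, List.mem_cons, or_assoc] at hx ⊢
        tauto
      have hh' : h + 4 ≤ h' := hlow h' (memL h' (by simp))
      have hh₂ : h + 4 ≤ h₂ := hlow h₂ (memL h₂ (by simp))
      -- elements of MAT are ≥ h' + 4
      have hMATlow : ∀ x ∈ MAT, h' + 4 ≤ x := by
        have hlen : h' ≤ S₂t.length := kills_head_length hj1 hS₂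
        obtain ⟨w, hw, hwl⟩ := exists_big S₂t h' (List.isChain_iff_pairwise.mpr hpS₂)
        intro x hx
        have hwx : w < x := crossS₂Rest w hw x (by simp [hx])
        omega
      -- elements of L₂ are ≥ h₂ + 4
      have hL₂low : ∀ x ∈ L₂, h₂ + 4 ≤ x := by
        have hlen : h₂ ≤ HSt.length := kills_head_length hj1 hHS
        obtain ⟨w, hw, hwl⟩ := exists_big HSt h₂ (List.isChain_iff_pairwise.mpr hpHS)
        intro x hx
        have hwx : w < x := crossQL₂ w (memQ w (by simp [hw])) x hx
        omega
      -- body of the first unit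
      have hbody : ∃ BH, BH.Sublist ((h' :: S₂t) ++ MAT) ∧
          Kills (List.replicate h k') BH ∧ List.Chain (IocK m) h BH := by
        rcases Nat.eq_zero_or_pos k' with hk0 | hk1
        · obtain ⟨P, hPsub, hPlen, hPchain⟩ := picks m h MAT h hpMAT
            (fun x hx => by have := hlow x (memL x (by simp [hx])); omega)
            (by rw [hk0, Nat.zero_add] at hMAT; exact hMAT)
          rw [hk0]
          exact ⟨P, hPsub.trans (List.sublist_append_right _ _),
            zkill _ _ (by omega), hPchain⟩
        · obtain ⟨Ysub, hYsubsub, hYkill, hYchain⟩ := ihk h h' MAT hk1 (by omega) hpMAT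
            hMATlow hMAT
          refine ⟨h' :: Ysub, ?_, hYkill, ?_⟩
          · exact List.Sublist.append (List.singleton_sublist.mpr (by simp)) hYsubsub
          · refine List.Chain.cons ?_ hYchain
            refine certIoc S₁ hS₁ (by omega) hpS₁ ?_
            intro s hs
            refine ⟨by have := hlow s (memL s (by simp [hs])); omega, ?_⟩
            have : s < h' := crossS₁R₁ s hs h' (by simp)
            omega
      obtain ⟨BH, hBHsub, hBHkill, hBHchain⟩ := hbody
      -- recursive call on L₂
      obtain ⟨Y₂, hY₂sub, hY₂kill, hY₂chain⟩ := ihc h₂ L₂ (by omega) (by omega) hpL₂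
        hL₂low hL₂
      -- the sublist property of the assembled list
      have s1 : (h₂ :: Y₂).Sublist ((h₂ :: HSt) ++ (IGN ++ L₂)) := by
        rw [List.cons_append]
        exact List.Sublist.cons₂ _
          ((hY₂sub.trans (List.sublist_append_right IGN L₂)).trans
            (List.sublist_append_right HSt _))
      have s2 : (BH ++ (h₂ :: Y₂)).Sublist
          (((h' :: S₂t) ++ MAT) ++ ((h₂ :: HSt) ++ (IGN ++ L₂))) :=
        List.Sublist.append hBHsub s1
      have hYsubL : (BH ++ (h₂ :: Y₂)).Sublist
          ((B :: ((S₁ ++ ((h' :: S₂t) ++ (MAT ++ (SP ++ (h₂ :: HSt))))) ++ IGN)) ++ L₂) := by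
        refine s2.trans ?_
        simp only [List.append_assoc, List.cons_append]
        refine List.Sublist.cons _ ?_
        refine (List.Sublist.cons₂ _ ?_).trans (List.sublist_append_right S₁ _)
        exact List.Sublist.append (List.Sublist.refl S₂t)
          (List.Sublist.append (List.Sublist.refl MAT) (List.sublist_append_right SP _))
      refine ⟨BH ++ (h₂ :: Y₂), hYsubL, ?_, ?_⟩
      · -- kills
        rw [kills_cons, ksstep_replicate_succ]
        have hsorted : List.Pairwise (· ≤ ·) (BH ++ (h₂ :: Y₂)) :=
          (hp.sublist hYsubL).imp le_of_lt
        exact kills_append BH _ _ _ hsorted hBHkill hY₂kill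
      · -- chain
        refine chain_append_all BH h h₂ Y₂ hBHchain ?_ hY₂chain
        intro w hw
        refine certIoc SP hSP (by omega) hpSP ?_
        intro s hs
        constructor
        · rcases List.mem_cons.mp hw with rfl | hw'
          · have := hlow s (memL s (by simp [hs])); omega
          · have hwmem : w ∈ (h' :: S₂t) ++ MAT := hBHsub.mem hw'
            rcases List.mem_append.mp hwmem with h1 | h1
            · exact crossS₂Rest w h1 s (by simp [hs])
            · exact crossMATR₃ w h1 s (by simp [hs])
        · have : s < h₂ := crossSPHS s hs h₂ (by simp)
          omega

lemma ksstep_pair (a x : ℕ) : KSstep [a, 0] x = [a] := by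
  rw [ksstep_cons, ksstep_zero]

lemma chain_zero {t : List ℕ} : ∀ (a : ℕ), List.Pairwise (· < ·) (a :: t) →
    List.Chain (IocK 0) a t := by
  induction t with
  | nil => intro a _; exact List.Chain.nil
  | cons b t ih =>
    intro a hp
    refine List.Chain.cons (iock_zero ((List.pairwise_cons.mp hp).1 b (by simp))) ?_
    exact ih b (List.pairwise_cons.mp hp).2

lemma iock_isLarge {m u v : ℕ} (h : IocK m u v) : IsLarge [m] (Finset.Ioc u v) := h

lemma finalize (n m : ℕ) (X : Finset ℕ) (a : ℕ) (t : List ℕ)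
    (hsub : (a :: t).Sublist (X.sort (· ≤ ·)))
    (hkill : Kills [n] (a :: t))
    (hchain : List.Chain (IocK m) a t) :
    ∃ Y ⊆ X, IsLarge [n] Y ∧ SparseFor [m] Y := by
  have hpair : List.Pairwise (· < ·) (a :: t) := (sort_pairwise_lt X).sublist hsub
  refine ⟨(a :: t).toFinset, ?_, ?_, ?_⟩
  · intro y hy
    rw [List.mem_toFinset] at hy
    exact (Finset.mem_sort _).mp (hsub.subset hy)
  · show Kills [n] _
    rw [toFinset_sort_eq hpair]
    exact hkill
  · intro u hu v hv huv
    rw [List.mem_toFinset] at hu hv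
    exact iock_isLarge (chain_pairs t a hchain hpair u hu v hv huv)

lemma worker (n m : ℕ) (X : Finset ℕ) (hmin : ∀ x ∈ X, 3 ≤ x)
    (hX : IsLarge [n + m, 0] X) : ∃ Y ⊆ X, IsLarge [n] Y ∧ SparseFor [m] Y := by
  have hpX : List.Pairwise (· < ·) (X.sort (· ≤ ·)) := sort_pairwise_lt X
  have hmin' : ∀ x ∈ X.sort (· ≤ ·), 3 ≤ x := fun x hx => hmin x ((Finset.mem_sort _).mp hx)
  have hXne : X.sort (· ≤ ·) ≠ [] := by
    intro he
    have : ([n + m, 0] : List ℕ) = [] := by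
      have := hX; unfold IsLarge at this; rw [he] at this; exact this
    simp at this
  obtain ⟨x₀, rest, hLXe⟩ := List.exists_cons_of_ne_nil hXne
  have hrest : Kills [n + m] rest := by
    have h1 : List.foldl KSstep [n+m,0] (x₀ :: rest) = [] := by
      have h2 := hX; unfold IsLarge at h2; rwa [hLXe] at h2
    rw [List.foldl_cons, ksstep_pair] at h1
    exact h1
  have hx₀3 : 3 ≤ x₀ := hmin' x₀ (by rw [hLXe]; simp)
  have hpir : List.Pairwise (· < ·) (x₀ :: rest) := by rw [← hLXe]; exact hpX
  have hrgt : ∀ x ∈ rest, x₀ < x := (List.pairwise_cons.mp hpir).1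
  have hpr : List.Pairwise (· < ·) rest := (List.pairwise_cons.mp hpir).2
  rcases Nat.eq_zero_or_pos m with hm0 | hm1
  · -- m = 0 : take rest itself
    subst hm0
    cases rest with
    | nil => exact absurd (by simpa using hrest) (by simp [kills_nil_iff])
    | cons b t =>
      refine finalize n 0 X b t ?_ (by simpa using hrest) (chain_zero b hpr)
      rw [hLXe]
      exact List.Sublist.cons _ (List.Sublist.refl _)
  rcases Nat.eq_zero_or_pos n with hn0 | hn1
  · -- n = 0 : take [x₀]
    subst hn0
    refine finalize 0 m X x₀ [] ?_ ?_ List.Chain.nil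
    · rw [hLXe]; exact List.Sublist.cons₂ _ (List.nil_sublist _)
    · show Kills (KSstep [0] x₀) []
      rw [ksstep_zero]; rfl
  -- n ≥ 1
  obtain ⟨B, Sseq, rfl⟩ := List.exists_cons_of_ne_nil (kills_ne_nil hrest)
  have hBx₀ : x₀ < B := hrgt B (by simp)
  have hSseq : Kills (List.replicate B (n + m - 1)) Sseq := by
    rw [kills_cons, show n + m = (n + m - 1) + 1 by omega, ksstep_succ] at hrest
    exact hrest
  rw [show B = (B - (x₀+1)) + (x₀+1) by omega, List.replicate_add] at hSseq
  obtain ⟨P, IGN, hSeq, hP, _⟩ := kills_split _ _ _ hSseq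
  have hpSseq : List.Pairwise (· < ·) Sseq := (List.pairwise_cons.mp hpr).2
  rcases Nat.lt_or_ge n 2 with hn2 | hn2
  · -- n = 1 : picks
    have hn1' : n = 1 := by omega
    subst hn1'
    have hPm : Kills (List.replicate (x₀+1) m) P := by
      rwa [show 1 + m - 1 = m by omega] at hP
    have hPpair : List.Pairwise (· < ·) P := by
      rw [hSeq] at hpSseq
      exact hpSseq.sublist (List.sublist_append_left _ _)
    have hPgt : ∀ x ∈ P, x₀ < x := by
      intro x hx
      refine hrgt x (List.mem_cons_of_mem _ ?_)
      rw [hSeq]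
      exact List.mem_append.mpr (Or.inl hx)
    obtain ⟨Pp, hPpsub, hPplen, hPpchain⟩ := picks m (x₀+1) P x₀ hPpair hPgt hPm
    refine finalize 1 m X x₀ Pp ?_ ?_ hPpchain
    · rw [hLXe]
      refine List.Sublist.cons₂ _ ?_
      refine (hPpsub.trans ?_)
      refine List.Sublist.cons _ ?_
      rw [hSeq]
      exact List.sublist_append_left _ _
    · show Kills (KSstep [1] x₀) Pp
      rw [ksstep_succ]
      exact zkill _ _ (by omega)
  · -- n ≥ 2 : full machine
    have hj2 : 1 ≤ n + m - 2 := by omega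
    rw [show x₀ + 1 = x₀ + 1 from rfl, List.replicate_succ'] at hP
    obtain ⟨S₁, MAT0, hPeq, hS₁, hMAT0⟩ := kills_split _ _ _ hP
    obtain ⟨t₀, Tseq, rfl⟩ := List.exists_cons_of_ne_nil (kills_ne_nil hS₁)
    have hTseq : Kills (List.replicate t₀ (n + m - 2)) Tseq := by
      rw [kills_cons, show n + m - 1 = (n + m - 2) + 1 by omega, ksstep_succ] at hS₁
      exact hS₁
    -- memberships in Sseq
    have hmemS : ∀ x : ℕ, (x = t₀ ∨ x ∈ Tseq ∨ x ∈ MAT0 ∨ x ∈ IGN) → x ∈ Sseq := by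
      intro x hx
      rw [hSeq, hPeq]
      simp only [List.mem_append, List.mem_cons, or_assoc]
      tauto
    have ht₀ : x₀ < t₀ := hrgt t₀ (List.mem_cons_of_mem _ (hmemS t₀ (Or.inl rfl)))
    -- carve T₁ and T₂ from Tseq
    rw [show t₀ = (t₀ - 2) + 2 by omega, List.replicate_add,
      show (List.replicate 2 (n+m-2)) = [n+m-2] ++ [n+m-2] from rfl] at hTseq
    obtain ⟨T12, TIGN, hTeq, hT12, _⟩ := kills_split _ _ _ hTseq
    obtain ⟨T₁, T₂, hT12eq, hT₁, hT₂⟩ := kills_split _ _ _ hT12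
    obtain ⟨h', T₂t, rfl⟩ := List.exists_cons_of_ne_nil (kills_ne_nil hT₂)
    -- pairwise pieces
    have hpTseq : List.Pairwise (· < ·) Tseq := by
      have : List.Pairwise (· < ·) (t₀ :: Tseq) := by
        rw [hSeq, hPeq] at hpSseq
        exact (hpSseq.sublist (List.sublist_append_left _ _)).sublist
          (List.sublist_append_left _ _)
      exact (List.pairwise_cons.mp this).2
    have hpT12 := (by rw [hTeq] at hpTseq; exact hpTseq.sublist (List.sublist_append_left _ _) :
      List.Pairwise (· < ·) T12)
    have hpT₁ : List.Pairwise (· < ·) T₁ := by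
      rw [hT12eq] at hpT12; exact hpT12.sublist (List.sublist_append_left _ _)
    have hpT₂ : List.Pairwise (· < ·) (h' :: T₂t) := by
      rw [hT12eq] at hpT12; exact hpT12.sublist (List.sublist_append_right _ _)
    have crossT₁T₂ : ∀ a ∈ T₁, ∀ b ∈ h' :: T₂t, a < b := by
      rw [hT12eq] at hpT12
      exact (List.pairwise_append.mp hpT12).2.2
    have hx₀h' : x₀ < h' := hrgt h' (List.mem_cons_of_mem _ (hmemS h' (by
      rw [hTeq, hT12eq]
      simp)))
    -- MAT0 facts
    have hpMAT0 : List.Pairwise (· < ·) MAT0 := by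
      rw [hSeq, hPeq] at hpSseq
      exact (hpSseq.sublist (List.sublist_append_left _ _)).sublist
        (List.sublist_append_right _ _)
    have crossS₁MAT0 : ∀ a ∈ (t₀ :: Tseq), ∀ b ∈ MAT0, a < b := by
      rw [hSeq, hPeq] at hpSseq
      exact (List.pairwise_append.mp
        (hpSseq.sublist (List.sublist_append_left _ _))).2.2
    have hMAT0low : ∀ x ∈ MAT0, h' + 4 ≤ x := by
      have hlen : h' ≤ T₂t.length := kills_head_length hj2 hT₂
      obtain ⟨w, hw, hwl⟩ := exists_big T₂t h' (List.isChain_iff_pairwise.mpr hpT₂)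
      intro x hx
      have hw' : w ∈ t₀ :: Tseq := by
        refine List.mem_cons_of_mem _ ?_
        rw [hTeq, hT12eq]
        simp only [List.mem_append, List.mem_cons, or_assoc]
        rcases List.mem_cons.mp hw with h1 | h1 <;> tauto
      have hwx : w < x := crossS₁MAT0 w hw' x hx
      have hh'4 : 4 ≤ h' := by omega
      omega
    -- MLB call
    obtain ⟨Ysub, hYsub, hYkill, hYchain⟩ := MLB m hm1 (n-1) x₀ h' MAT0 (by omega)
      (by omega) hpMAT0 hMAT0low
      (by rwa [show n - 1 + m = n + m - 1 by omega])
    -- assemble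
    refine finalize n m X x₀ (h' :: Ysub) ?_ ?_ ?_
    · rw [hLXe]
      refine List.Sublist.cons₂ _ ?_
      refine List.Sublist.cons _ ?_
      rw [hSeq, hPeq]
      have h1 : (h' :: Ysub).Sublist ((h' :: T₂t) ++ MAT0) :=
        List.Sublist.append (List.singleton_sublist.mpr (by simp)) hYsub
      refine h1.trans ?_
      have h2 : ((h' :: T₂t) ++ MAT0).Sublist ((t₀ :: Tseq) ++ MAT0) := by
        refine List.Sublist.append ?_ (List.Sublist.refl _)
        refine List.Sublist.cons _ ?_
        rw [hTeq, hT12eq]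
        exact (List.sublist_append_right T₁ _).trans
          (List.sublist_append_left _ _)
      exact h2.trans (List.sublist_append_left _ _)
    · show Kills (KSstep [n] x₀) (h' :: Ysub)
      rw [show n = (n-1)+1 by omega, ksstep_succ]
      exact hYkill
    · refine List.Chain.cons ?_ hYchain
      refine certIoc T₁ hT₁ (by omega) hpT₁ ?_
      intro s hs
      constructor
      · refine hrgt s (List.mem_cons_of_mem _ (hmemS s ?_))
        rw [hTeq, hT12eq]
        simp only [List.mem_append, List.mem_cons, or_assoc]
        tauto
      · have : s < h' := crossT₁T₂ s hs h' (by simp)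
        omega

lemma list_eq_of_pairwise_mem {l₁ l₂ : List ℕ} (h₁ : List.Pairwise (· < ·) l₁)
    (h₂ : List.Pairwise (· < ·) l₂) (hm : ∀ x, x ∈ l₁ ↔ x ∈ l₂) : l₁ = l₂ :=
  List.Sublist.antisymm
    (sublist_of_subset_sorted l₂ l₁ h₁ h₂ (fun x hx => (hm x).mp hx))
    (sublist_of_subset_sorted l₁ l₂ h₂ h₁ (fun x hx => (hm x).mpr hx))

lemma sortIoc_eq_range' (a b : ℕ) :
    (Finset.Ioc a b).sort (· ≤ ·) = List.range' (a+1) (b-a) := by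
  refine list_eq_of_pairwise_mem (sort_pairwise_lt _) (List.pairwise_lt_range' (s := _) (n := _)) ?_
  intro x
  rw [Finset.mem_sort, Finset.mem_Ioc, List.mem_range'_1]
  omega

lemma range'_split {a len : ℕ} {P Q : List ℕ} (h : List.range' a len = P ++ Q) :
    P = List.range' a P.length ∧ Q = List.range' (a + P.length) (len - P.length) := by
  have hlen : P.length + Q.length = len := by
    have h3 := congrArg List.length h
    simp only [List.length_range', List.length_append] at h3
    omega
  have h2 : List.range' a P.length ++ List.range' (a + P.length) Q.length
      = List.range' a len := by
    have h4 := List.range'_append (s := a) (m := P.length) (n := Q.length) (step := 1)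
    simp only [Nat.one_mul] at h4
    rw [h4]
    congr 1
  rw [← h2] at h
  obtain ⟨e1, e2⟩ := List.append_inj h.symm (by simp)
  refine ⟨e1, ?_⟩
  rw [e2]
  congr 1
  omega

lemma kills_one_range {a len : ℕ} (h : Kills [1] (List.range' a len)) :
    a + 1 ≤ len := by
  cases len with
  | zero => exact absurd h (by simp [kills_nil_iff])
  | succ len' =>
    rw [List.range'_succ, kills_cons, ksstep_succ] at h
    have := kills_length _ _ h
    simp at this
    omega

lemma kills_rep_one_range : ∀ (j a len : ℕ), 1 ≤ j →
    Kills (List.replicate j 1) (List.range' a len) →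
    2 ^ j * (a + 1) ≤ a + len + 1 := by
  intro j
  induction j with
  | zero => omega
  | succ j ih =>
    intro a len _ hk
    rcases Nat.eq_zero_or_pos j with hj0 | hj1
    · subst hj0
      have h1 := kills_one_range (by simpa using hk)
      have : (2:ℕ) ^ 1 = 2 := by norm_num
      omega
    · rw [List.replicate_succ'] at hk
      obtain ⟨P, Q, hPQ, hP, hQ⟩ := kills_split _ _ _ hk
      obtain ⟨eP, eQ⟩ := range'_split hPQ
      rw [eP] at hP
      rw [eQ] at hQ
      have h1 : a + 1 ≤ P.length := kills_one_range hP
      have h2 := ih (a + P.length) (len - P.length) hj1 hQ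
      have hlenle : P.length ≤ len := by
        have h5 := congrArg List.length hPQ
        simp only [List.length_range', List.length_append] at h5
        omega
      have h3 : 2 ^ j * (2 * (a + 1)) ≤ 2 ^ j * (a + P.length + 1) :=
        Nat.mul_le_mul_left _ (by omega)
      calc 2 ^ (j+1) * (a + 1) = 2 ^ j * (2 * (a+1)) := by ring
        _ ≤ 2 ^ j * (a + P.length + 1) := h3
        _ ≤ a + P.length + (len - P.length) + 1 := h2
        _ = a + len + 1 := by omega

lemma kills_two_range {a len : ℕ} (ha : 1 ≤ a) (h : Kills [2] (List.range' a len)) :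
    2 ^ (a+1) ≤ a + len := by
  cases len with
  | zero => exact absurd h (by simp [kills_nil_iff])
  | succ len' =>
    rw [List.range'_succ, kills_cons, ksstep_succ] at h
    have h2 := kills_rep_one_range a (a+1) len' ha h
    have h3 : 2 ^ a * (a + 2) ≤ a + len' + 2 := by
      calc 2 ^ a * (a + 2) = 2 ^ a * (a + 1 + 1) := by ring
        _ ≤ a + 1 + len' + 1 := h2
        _ = a + len' + 2 := by omega
    have h5 : 2 ^ a * 3 ≤ 2 ^ a * (a + 2) := Nat.mul_le_mul_left _ (by omega)
    have h6 : (2:ℕ) ^ (a+1) = 2 ^ a * 2 := pow_succ 2 a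
    have h7 : 1 ≤ 2 ^ a := Nat.one_le_two_pow
    omega

lemma rep2_split {c a len : ℕ} (hc : 2 ≤ c)
    (h : Kills (List.replicate c 2) (List.range' a len)) :
    ∃ t₁ t₂, t₁ + t₂ ≤ len ∧ Kills [2] (List.range' a t₁) ∧
      Kills [2] (List.range' (a + t₁) t₂) := by
  rw [show c = (c-1)+1 by omega, List.replicate_succ'] at h
  obtain ⟨P₁, Q₁, hPQ₁, hP₁, hQ₁⟩ := kills_split _ _ _ h
  obtain ⟨eP₁, eQ₁⟩ := range'_split hPQ₁
  have hl1 : P₁.length ≤ len := by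
    have h5 := congrArg List.length hPQ₁
    simp only [List.length_range', List.length_append] at h5
    omega
  rw [eQ₁] at hQ₁
  rw [show c - 1 = (c-2)+1 by omega, List.replicate_succ'] at hQ₁
  obtain ⟨P₂, Q₂, hPQ₂, hP₂, _⟩ := kills_split _ _ _ hQ₁
  obtain ⟨eP₂, _⟩ := range'_split hPQ₂
  have hl2 : P₂.length ≤ len - P₁.length := by
    have h5 := congrArg List.length hPQ₂
    simp only [List.length_range', List.length_append] at h5
    omega
  refine ⟨P₁.length, P₂.length, by omega, ?_, ?_⟩
  · rwa [eP₁] at hP₁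
  · rwa [eP₂] at hP₂

lemma exp_of_isLarge_three {x y : ℕ} (hx : 3 ≤ x) (h : IsLarge [3] (Finset.Ioc x y)) :
    4 ^ x < y := by
  have hk : Kills [3] (List.range' (x+1) (y-x)) := by
    have h2 : Kills [3] ((Finset.Ioc x y).sort (· ≤ ·)) := h
    rwa [sortIoc_eq_range'] at h2
  rcases Nat.lt_or_ge x y with hxy | hxy
  swap
  · exfalso
    rw [show y - x = 0 by omega] at hk
    exact absurd hk (by simp [kills_nil_iff])
  obtain ⟨len, hlen⟩ : ∃ len, y - x = len + 1 := ⟨y - x - 1, by omega⟩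
  rw [hlen, List.range'_succ, kills_cons,
    show (3:ℕ) = 2 + 1 from rfl, ksstep_succ] at hk
  -- hk : Kills (replicate (x+1) 2) (range' (x+1+1) len)
  obtain ⟨t₁, t₂, htle, hk1, hk2⟩ := rep2_split (by omega) hk
  have c1 : 2 ^ (x+1+1+1) ≤ x+1+1 + t₁ := kills_two_range (by omega) hk1
  have c2 : 2 ^ (x+1+1+t₁+1) ≤ x+1+1+t₁ + t₂ := kills_two_range (by omega) hk2
  have hy : y = x + len + 1 := by omega
  -- exponent bookkeeping
  have f1 : x < 2 ^ x := Nat.lt_two_pow_self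
  have f8 : (2:ℕ) ^ (x+1+1+1) = 8 * 2 ^ x := by ring
  have hxt : x < t₁ + 2 := by omega
  have e4 : (4:ℕ) ^ x = 2 ^ (2 * x) := by
    rw [show (4:ℕ) = 2 ^ 2 from rfl, ← pow_mul]
  have g1 : (4:ℕ) ^ x < 2 ^ (x + t₁ + 2) := by
    rw [e4]
    exact Nat.pow_lt_pow_right (by omega) (by omega)
  have g2 : (2:ℕ) ^ (x+1+1+t₁+1) = 2 * 2 ^ (x + t₁ + 2) := by
    rw [show x+1+1+t₁+1 = (x+t₁+2)+1 by omega, pow_succ]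
    ring
  have g3 : 1 ≤ 2 ^ (x + t₁ + 2) := Nat.one_le_two_pow
  omega

end KS

/-- Let `n, m ∈ ℕ`. If `X ⊆ ℕ` is a finite set which is `(ω^{n+m}+1)`-large and
`min X ≥ 3`, then there exists `Y ⊆ X` such that `Y` is `ω^n`-large and `ω^m`-sparse.
In particular, if `X` is `(ω^{n+3}+1)`-large and `min X ≥ 3`, then there exists
`Y ⊆ X` such that `Y` is `ω^n`-large and exp-sparse. -/
theorem sparse_subset_of_isLarge (n m : ℕ) (X : Finset ℕ) (hmin : ∀ x ∈ X, 3 ≤ x) :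
    (IsLarge [n + m, 0] X → ∃ Y ⊆ X, IsLarge [n] Y ∧ SparseFor [m] Y) ∧
    (IsLarge [n + 3, 0] X → ∃ Y ⊆ X, IsLarge [n] Y ∧ ExpSparse Y) := by
  constructor
  · exact fun hX => KS.worker n m X hmin hX
  · intro hX
    obtain ⟨Y, hYX, hY1, hY3⟩ := KS.worker n 3 X hmin hX
    refine ⟨Y, hYX, hY1, ?_, ?_⟩
    · intro x hx
      exact hmin x (hYX hx)
    · intro x hx y hy hxy
      exact KS.exp_of_isLarge_three (hmin x (hYX hx)) (hY3 x hx y hy hxy)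
end
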